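/- Let S be a nonabelian finite simple group and Q a nontrivial finite group, and let W = (Q → S) ⋊ Q be the regular wreath product S ≀ Q, i.e., the semidirect product of the group B₀ = (Q → S) of functions from Q to S (with pointwise multiplication) by Q, where q ∈ Q acts on f : Q → S by (q • f)(x) = f(q⁻¹x). Then the base subgroup B = {(f, 1) : f ∈ B₀} is the unique minimal normal subgroup of W; in particular, every nontrivial normal subgroup of W contains B. -/

import Mathlib

/-- The action of `Q` on the base group `Q → S` of the regular wreath product `S ≀ Q`,
permuting coordinates by left translation: `(q • f) x = f (q⁻¹ * x)`. -/
def wreathAction (S Q : Type*) [Group S] [Group Q] : Q →* MulAut (Q → S) where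
  toFun q :=
    { toFun := fun f x => f (q⁻¹ * x)
      invFun := fun f x => f (q * x)
      left_inv := fun f => by funext x; simp [← mul_assoc]
      right_inv := fun f => by funext x; simp [← mul_assoc]
      map_mul' := fun f g => rfl }
  map_one' := by ext f x; simp
  map_mul' := fun q r => by ext f x; simp [mul_assoc, mul_inv_rev]

open SemidirectProduct

/-- Let `S` be a nonabelian finite simple group and `Q` a nontrivial finite
group, and let `W = (Q → S) ⋊ Q` be the regular wreath product `S ≀ Q`. Then the base
subgroup `B` (the canonical copy of `Q → S`) is the unique minimal normal subgroup of `W`: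
it is normal, nontrivial, and contained in every nontrivial normal subgroup of `W`. -/
theorem stmt_2 (S Q : Type*) [Group S] [Finite S] [IsSimpleGroup S]
    (hna : ∃ x y : S, x * y ≠ y * x) [Group Q] [Finite Q] [Nontrivial Q] :
    (SemidirectProduct.inl.range :
        Subgroup ((Q → S) ⋊[wreathAction S Q] Q)).Normal ∧
    (SemidirectProduct.inl.range :
        Subgroup ((Q → S) ⋊[wreathAction S Q] Q)) ≠ ⊥ ∧
    ∀ N : Subgroup ((Q → S) ⋊[wreathAction S Q] Q), N.Normal → N ≠ ⊥ →
      SemidirectProduct.inl.range ≤ N := by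
  classical
  have := Fintype.ofFinite Q
  set φ := wreathAction S Q with hφ
  have hφapp : ∀ (q : Q) (f : Q → S) (x : Q), φ q f x = f (q⁻¹ * x) := fun _ _ _ => rfl
  have hS1 : ∃ s : S, s ≠ 1 := by
    obtain ⟨x, y, h⟩ := hna
    exact ⟨x, fun hx => h (by simp [hx])⟩
  have hcenter : ∀ s : S, s ≠ 1 → ∃ t : S, t * s * t⁻¹ * s⁻¹ ≠ 1 := by
    intro s hs
    by_contra h
    push_neg at h
    have hsz : s ∈ Subgroup.center S := by
      rw [Subgroup.mem_center_iff]
      intro t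
      have ht : open scoped commutatorElement in ⁅t, s⁆ = 1 := by rw [commutatorElement_def]; exact h t
      exact commutatorElement_eq_one_iff_mul_comm.mp ht
    have hnorm : (Subgroup.center S).Normal := inferInstance
    rcases hnorm.eq_bot_or_eq_top with hc | hc
    · exact hs (by simpa [hc] using hsz)
    · obtain ⟨x, y, hxy⟩ := hna
      have hy : y ∈ Subgroup.center S := by rw [hc]; trivial
      exact hxy ((Subgroup.mem_center_iff.mp hy) x)
  refine ⟨?_, ?_, ?_⟩
  · rw [range_inl_eq_ker_rightHom]
    infer_instance
  · intro h
    obtain ⟨s, hs⟩ := hS1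
    have hmem : (inl (Pi.mulSingle (1 : Q) s) : (Q → S) ⋊[φ] Q) ∈
        (inl.range : Subgroup ((Q → S) ⋊[φ] Q)) := ⟨_, rfl⟩
    rw [h, Subgroup.mem_bot] at hmem
    have h2 : Pi.mulSingle (1 : Q) s = (1 : Q → S) :=
      inl_injective (by simpa using hmem)
    exact hs (by simpa using congrFun h2 1)
  · intro N hN hNbot
    -- Step 1: N contains a nontrivial element of the base
    have step1 : ∃ f : Q → S, f ≠ 1 ∧ (inl f : (Q → S) ⋊[φ] Q) ∈ N := by
      obtain ⟨w, hwN, hw1⟩ : ∃ w : (Q → S) ⋊[φ] Q, w ∈ N ∧ w ≠ 1 := by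
        by_contra h
        push_neg at h
        exact hNbot (Subgroup.eq_bot_iff_forall N |>.mpr fun x hx => h x hx)
      by_cases hq : w.right = 1
      · have hww : (inl w.left : (Q → S) ⋊[φ] Q) = w := by
          ext
          · simp
          · simp [hq]
        refine ⟨w.left, ?_, by rwa [hww]⟩
        intro h
        apply hw1
        rw [← hww, h, map_one]
      · obtain ⟨s, hs⟩ := hS1
        set g : Q → S := Pi.mulSingle (1 : Q) s with hg
        set c := w * inl g * w⁻¹ * (inl g)⁻¹ with hc
        have hcN : c ∈ N := by
          have heq : w * inl g * w⁻¹ * (inl g)⁻¹ =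
              w * (inl g * w⁻¹ * (inl g)⁻¹) := by group
          rw [hc, heq]
          exact N.mul_mem hwN (hN.conj_mem _ (N.inv_mem hwN) (inl g))
        have hcr : c.right = 1 := by
          simp [hc, mul_right, inv_right, right_inl]
        have hcl : c.left 1 = s⁻¹ := by
          simp only [hc, mul_left, mul_right, inv_left, inv_right, left_inl, right_inl,
            mul_one, one_mul, map_mul, map_inv]
          simp [Pi.mul_apply, Pi.inv_apply, hφapp, hg, Pi.mulSingle_apply, hq]
        have hcc : (inl c.left : (Q → S) ⋊[φ] Q) = c := by
          ext
          · simp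
          · simp [hcr]
        refine ⟨c.left, ?_, by rwa [hcc]⟩
        intro h
        rw [h] at hcl
        exact hs (by simpa using hcl.symm)
    -- Step 2
    obtain ⟨f₀, hf₀1, hf₀N⟩ := step1
    set M : Subgroup (Q → S) := N.comap inl with hM
    have hf₀M : f₀ ∈ M := hf₀N
    have hMconj : ∀ (g : Q → S), ∀ f ∈ M, g * f * g⁻¹ ∈ M := by
      intro g f hf
      show inl (g * f * g⁻¹) ∈ N
      rw [map_mul, map_mul, map_inv]
      exact hN.conj_mem _ hf (inl g)
    have hMQ : ∀ (q : Q), ∀ f ∈ M, φ q f ∈ M := by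
      intro q f hf
      show inl (φ q f) ∈ N
      rw [inl_aut]
      simpa using hN.conj_mem _ hf (inr q)
    have key : ∀ (y : Q) (s : S), Pi.mulSingle y s ∈ M := by
      intro y
      obtain ⟨x₀, hx₀⟩ : ∃ x₀, f₀ x₀ ≠ 1 := by
        by_contra h
        push_neg at h
        exact hf₀1 (funext h)
      set f := φ (y * x₀⁻¹) f₀ with hf
      have hfM : f ∈ M := hMQ _ _ hf₀M
      have hfy : f y ≠ 1 := by
        rw [hf, hφapp]
        simpa [mul_assoc] using hx₀
      set K : Subgroup S :=
        { carrier := {s : S | Pi.mulSingle y s ∈ M}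
          one_mem' := by simp [Set.mem_setOf_eq, Subgroup.one_mem]
          mul_mem' := by
            intro a b ha hb
            have hm := M.mul_mem ha hb
            rwa [← Pi.mulSingle_mul] at hm
          inv_mem' := by
            intro a ha
            have hm := M.inv_mem ha
            rwa [← Pi.mulSingle_inv] at hm } with hK
      have hKnormal : K.Normal := by
        constructor
        intro s hs t
        have hm := hMconj (Pi.mulSingle y t) _ hs
        have heq : Pi.mulSingle y t * Pi.mulSingle y s * (Pi.mulSingle y t)⁻¹ =
            (Pi.mulSingle y (t * s * t⁻¹) : Q → S) := by
          funext x
          by_cases hx : x = y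
          · subst hx; simp
          · simp [Pi.mulSingle_apply, hx]
        show Pi.mulSingle y (t * s * t⁻¹) ∈ M
        rwa [heq] at hm
      have hKne : K ≠ ⊥ := by
        obtain ⟨t, ht⟩ := hcenter (f y) hfy
        have hcomm : t * f y * t⁻¹ * (f y)⁻¹ ∈ K := by
          have h1 := hMconj (Pi.mulSingle y t) f hfM
          have h2 := M.mul_mem h1 (M.inv_mem hfM)
          have heq : Pi.mulSingle y t * f * (Pi.mulSingle y t)⁻¹ * f⁻¹ =
              Pi.mulSingle y (t * f y * t⁻¹ * (f y)⁻¹) := by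
            funext x
            by_cases hx : x = y
            · subst hx; simp
            · simp [Pi.mulSingle_apply, hx]
          show Pi.mulSingle y (t * f y * t⁻¹ * (f y)⁻¹) ∈ M
          rwa [heq] at h2
        intro h
        rw [h, Subgroup.mem_bot] at hcomm
        exact ht hcomm
      have hKtop : K = ⊤ := hKnormal.eq_bot_or_eq_top.resolve_left hKne
      intro s
      show s ∈ K
      rw [hKtop]; trivial
    -- conclude by induction on support
    have all_in : ∀ (A : Finset Q) (f : Q → S), (∀ x ∉ A, f x = 1) → f ∈ M := by
      intro A
      induction A using Finset.induction_on with
      | empty =>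
        intro f hf
        have : f = 1 := funext fun x => hf x (by simp)
        rw [this]; exact M.one_mem
      | @insert a A' ha ih =>
        intro f hf
        set f' : Q → S := f * (Pi.mulSingle a (f a))⁻¹ with hf'
        have hf'supp : ∀ x ∉ A', f' x = 1 := by
          intro x hx
          by_cases hxa : x = a
          · subst hxa
            simp [hf']
          · have : f x = 1 := hf x (by simp [hxa, hx])
            simp [hf', Pi.mulSingle_apply, hxa, this]
        have hf'M : f' ∈ M := ih f' hf'supp
        have : f = Pi.mulSingle a (f a) * f' := by
          funext x
          by_cases hxa : x = a
          · subst hxa; simp [hf']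
          · simp [hf', Pi.mulSingle_apply, hxa]
        rw [this]
        exact M.mul_mem (key a (f a)) hf'M
    rintro x ⟨f, rfl⟩
    exact all_in Finset.univ f (fun x hx => absurd (Finset.mem_univ x) hx)
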